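/- Let M ∈ ℝ^{m×n} and C ∈ ℝ^{d×n}, let ε ≥ 0, and suppose (1−ε)·MᵀM ⪯ CᵀC ⪯ (1+ε)·MᵀM in the Loewner order. Then for every orthogonal projection matrix P ∈ ℝ^{n×n} (Pᵀ = P and P² = P): (1−ε)·‖M − MP‖_F² ≤ ‖C − CP‖_F² ≤ (1+ε)·‖M − MP‖_F². In particular, a (1±ε) spectral approximation of M preserves all projection costs of M up to a (1±ε) factor. -/

import Mathlib

open Matrix

/-- The squared Frobenius norm `‖M‖_F²` of a real matrix. -/
noncomputable def frobNormSq {α β : Type*} [Fintype α] [Fintype β]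
    (M : Matrix α β ℝ) : ℝ :=
  ∑ i, ∑ j, (M i j) ^ 2

lemma trace_nonneg_of_psd {n : ℕ} {A : Matrix (Fin n) (Fin n) ℝ} (hA : A.PosSemidef) :
    0 ≤ A.trace := by
  rw [Matrix.trace]
  apply Finset.sum_nonneg
  intro i _
  have := hA.dotProduct_mulVec_nonneg (Pi.single i 1)
  simpa [dotProduct, Matrix.mulVec, Pi.single_apply, Finset.sum_ite_eq'] using this

lemma frob_eq_trace {a b : ℕ} (A : Matrix (Fin a) (Fin b) ℝ) :
    frobNormSq A = (Aᵀ * A).trace := by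
  rw [Matrix.trace, frobNormSq, Finset.sum_comm]
  simp [Matrix.mul_apply, Matrix.diag, sq]

/-- **Spectral approximation preserves projection costs.**
If `(1-ε)·MᵀM ⪯ CᵀC ⪯ (1+ε)·MᵀM`, then for every orthogonal projection `P`,
`(1-ε)‖M−MP‖_F² ≤ ‖C−CP‖_F² ≤ (1+ε)‖M−MP‖_F²`. -/
theorem spectral_approx_preserves_projection_costs (m d n : ℕ) (ε : ℝ) (hε : 0 ≤ ε)
    (M : Matrix (Fin m) (Fin n) ℝ) (C : Matrix (Fin d) (Fin n) ℝ)
    (h1 : (Cᵀ * C - (1 - ε) • (Mᵀ * M)).PosSemidef)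
    (h2 : ((1 + ε) • (Mᵀ * M) - Cᵀ * C).PosSemidef) :
    ∀ P : Matrix (Fin n) (Fin n) ℝ, Pᵀ = P → P * P = P →
      (1 - ε) * frobNormSq (M - M * P) ≤ frobNormSq (C - C * P) ∧
      frobNormSq (C - C * P) ≤ (1 + ε) * frobNormSq (M - M * P) := by
  intro P hPT hPP
  set Q : Matrix (Fin n) (Fin n) ℝ := 1 - P with hQ
  have hQT : Qᴴ = Q := by
    rw [hQ, conjTranspose_sub, conjTranspose_one, conjTranspose_eq_transpose_of_trivial, hPT]
  have key : ∀ (a : ℕ) (A : Matrix (Fin a) (Fin n) ℝ),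
      frobNormSq (A - A * P) = (Q * (Aᵀ * A) * Q).trace := by
    intro a A
    have hAQ : A - A * P = A * Q := by
      rw [hQ, Matrix.mul_sub, Matrix.mul_one]
    rw [hAQ, frob_eq_trace, Matrix.transpose_mul,
      ← conjTranspose_eq_transpose_of_trivial Q, hQT, Matrix.mul_assoc, ← Matrix.mul_assoc Aᵀ,
      ← Matrix.mul_assoc]
  have kM := key m M
  have kC := key d C
  constructor
  · have h := trace_nonneg_of_psd (hQT ▸ h1.mul_mul_conjTranspose_same Q)
    have expand : Q * (Cᵀ * C - (1 - ε) • (Mᵀ * M)) * Q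
        = Q * (Cᵀ * C) * Q - (1 - ε) • (Q * (Mᵀ * M) * Q) := by
      simp only [Matrix.mul_sub, Matrix.sub_mul, Matrix.mul_smul, Matrix.smul_mul]
    rw [expand, Matrix.trace_sub, Matrix.trace_smul] at h
    simp only [smul_eq_mul] at h
    rw [kM, kC]
    linarith
  · have h := trace_nonneg_of_psd (hQT ▸ h2.mul_mul_conjTranspose_same Q)
    have expand : Q * ((1 + ε) • (Mᵀ * M) - Cᵀ * C) * Q
        = (1 + ε) • (Q * (Mᵀ * M) * Q) - Q * (Cᵀ * C) * Q := by
      simp only [Matrix.mul_sub, Matrix.sub_mul, Matrix.mul_smul, Matrix.smul_mul]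
    rw [expand, Matrix.trace_sub, Matrix.trace_smul] at h
    simp only [smul_eq_mul] at h
    rw [kM, kC]
    linarith
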